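/- arXiv:0806.3277 — 4 statements merged into one kernel-verified Lean document; each statement's English description precedes it below -/
import Mathlib

section
/- Extended McMillan Theorem: Let C and D be uniquely decipherable codes over the same finite nonempty alphabet A with r elements, such that every string in C is a concatenation of a finite sequence of strings in D. Then the Kraft sum of C is less than or equal to the Kraft sum of D, i.e. K(C) ≤ K(D). -/
/-- A finite set `C` of strings over `A` is a uniquely decipherable code if the
concatenation map is injective on finite sequences of elements of `C`. -/
def UniquelyDecipherable {A : Type*} (C : Finset (List A)) : Prop :=
  ∀ u v : List (List A), (∀ x ∈ u, x ∈ C) → (∀ x ∈ v, x ∈ C) →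
    u.flatten = v.flatten → u = v

/-- The Kraft sum `K(C) = Σ_{x ∈ C} r^{-len(x)}` where `r` is the size of the alphabet. -/
noncomputable def kraftSum {A : Type*} [Fintype A] (C : Finset (List A)) : ℝ :=
  ∑ x ∈ C, (Fintype.card A : ℝ) ^ (-(x.length : ℤ))

open Finset

section Tuples
variable {β : Type*} [DecidableEq β]

def tuples (E : Finset β) : ℕ → Finset (List β)
  | 0 => {([] : List β)}
  | n+1 => (E ×ˢ tuples E n).image (fun p => p.1 :: p.2)

lemma mem_tuples {E : Finset β} : ∀ {n : ℕ} {l : List β},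
    l ∈ tuples E n ↔ l.length = n ∧ ∀ x ∈ l, x ∈ E := by
  intro n
  induction n with
  | zero =>
    intro l
    simp [tuples, List.length_eq_zero_iff]
    rintro rfl; simp
  | succ n ih =>
    intro l
    simp only [tuples, mem_image, mem_product, Prod.exists]
    constructor
    · rintro ⟨a, u, ⟨ha, hu⟩, rfl⟩
      obtain ⟨h1, h2⟩ := ih.mp hu
      refine ⟨by simp [h1], ?_⟩
      intro x hx
      rcases List.mem_cons.mp hx with rfl | hx
      · exact ha
      · exact h2 x hx
    · rintro ⟨h1, h2⟩
      cases l with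
      | nil => simp at h1
      | cons a u =>
        refine ⟨a, u, ⟨h2 a (by simp), ih.mpr ⟨by simpa using h1, fun x hx => h2 x (by simp [hx])⟩⟩, rfl⟩

lemma sum_tuples (E : Finset β) (w : β → ℝ) :
    ∀ n, ∑ l ∈ tuples E n, (l.map w).prod = (∑ x ∈ E, w x) ^ n := by
  intro n
  induction n with
  | zero => simp [tuples]
  | succ n ih =>
    rw [tuples, Finset.sum_image]
    · rw [Finset.sum_product]
      simp only [List.map_cons, List.prod_cons]
      rw [← Finset.sum_mul_sum]
      rw [pow_succ, ih, mul_comm]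
    · rintro ⟨a, u⟩ _ ⟨b, v⟩ _ h
      simp at h
      simp [h.1, h.2]

lemma card_tuples (E : Finset β) : ∀ n, (tuples E n).card = E.card ^ n := by
  intro n
  induction n with
  | zero => simp [tuples]
  | succ n ih =>
    rw [tuples, Finset.card_image_of_injective, Finset.card_product, ih, pow_succ, mul_comm]
    rintro ⟨a, u⟩ ⟨b, v⟩ h
    simp at h
    simp [h.1, h.2]

end Tuples

lemma prod_w {A : Type*} (r : ℝ) (hr : r ≠ 0) (v : List (List A)) :
    (v.map (fun x => r ^ (-(x.length : ℤ)))).prod = r ^ (-(v.flatten.length : ℤ)) := by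
  induction v with
  | nil => simp
  | cons a u ih =>
    simp only [List.map_cons, List.prod_cons, ih, List.flatten_cons, List.length_append]
    rw [← zpow_add₀ hr]
    congr 1
    push_cast
    ring

lemma pow_le_linear_imp_le_one {y a b : ℝ} (hy : 0 ≤ y)
    (h : ∀ n : ℕ, y ^ n ≤ a * n + b) : y ≤ 1 := by
  by_contra hy1
  push_neg at hy1
  set ε := y - 1 with hε
  have hεpos : 0 < ε := sub_pos.mpr hy1
  obtain ⟨n, hn⟩ := exists_nat_gt ((2 * |a| + |b|) / ε ^ 2)
  have hpos : (0:ℝ) ≤ (2 * |a| + |b|) / ε ^ 2 := by positivity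
  have hn1 : (1 : ℝ) ≤ n := by
    have hlt := hpos.trans_lt hn
    exact_mod_cast Nat.one_le_iff_ne_zero.mpr (by rintro rfl; simp at hlt)
  have hbern : (n : ℝ) * ε ≤ y ^ n := by
    have := one_add_mul_le_pow (a := ε) (by linarith) n
    have h1 : (1 : ℝ) + ε = y := by simp [hε]
    rw [h1] at this
    nlinarith [hεpos, hn1]
  have hsq : ((n : ℝ) * ε) ^ 2 ≤ y ^ (2 * n) := by
    rw [two_mul, pow_add]
    have h0 : (0:ℝ) ≤ (n:ℝ) * ε := by positivity
    nlinarith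
  have hlin := h (2 * n)
  have : ((n : ℝ)) ^ 2 * ε ^ 2 ≤ (2 * |a| + |b|) * n := by
    have h2 : a * (2 * n : ℕ) + b ≤ (2 * |a| + |b|) * n := by
      push_cast
      have := le_abs_self a
      have := le_abs_self b
      nlinarith [abs_nonneg a, abs_nonneg b]
    nlinarith [hsq.trans (hlin.trans h2)]
  have : (n : ℝ) * ε ^ 2 ≤ 2 * |a| + |b| := by
    nlinarith
  rw [div_lt_iff₀ (by positivity)] at hn
  nlinarith

lemma nil_notMem {A : Type*} {C : Finset (List A)} (hC : UniquelyDecipherable C) :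
    ([] : List A) ∉ C := by
  intro h
  have := hC [([] : List A)] [] (by simpa using h) (by simp) (by simp)
  simp at this

lemma mcmillan {A : Type*} [Fintype A] [Nonempty A] (D : Finset (List A))
    (hD : UniquelyDecipherable D) : kraftSum D ≤ 1 := by
  classical
  set r : ℝ := (Fintype.card A : ℝ) with hr
  have hr0 : (0 : ℝ) < r := by
    have := Fintype.card_pos (α := A)
    positivity
  have hrne : r ≠ 0 := ne_of_gt hr0
  set w : List A → ℝ := fun x => r ^ (-(x.length : ℤ)) with hw
  have hwpos : ∀ x : List A, 0 < w x := fun x => zpow_pos hr0 _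
  have hK : kraftSum D = ∑ x ∈ D, w x := rfl
  have hK0 : 0 ≤ kraftSum D := by
    rw [hK]; exact Finset.sum_nonneg fun x _ => (hwpos x).le
  set M := D.sup List.length with hM
  have key : ∀ n : ℕ, kraftSum D ^ n ≤ (M : ℝ) * n + 1 := by
    intro n
    rw [hK, ← sum_tuples D w n]
    have hstep : ∀ l ∈ tuples D n, (l.map w).prod = w l.flatten := by
      intro l _; exact prod_w r hrne l
    rw [Finset.sum_congr rfl hstep]
    have hinj : ∀ u ∈ tuples D n, ∀ v ∈ tuples D n,
        u.flatten = v.flatten → u = v := by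
      intro u hu v hv huv
      exact hD u v (fun x hx => (mem_tuples.mp hu).2 x hx)
        (fun x hx => (mem_tuples.mp hv).2 x hx) huv
    rw [← Finset.sum_image hinj]
    have hsubset : (tuples D n).image List.flatten ⊆
        (Finset.range (n * M + 1)).biUnion (fun m => tuples (Finset.univ : Finset A) m) := by
      intro s hs
      obtain ⟨l, hl, rfl⟩ := Finset.mem_image.mp hs
      obtain ⟨hlen, hmem⟩ := mem_tuples.mp hl
      refine Finset.mem_biUnion.mpr ⟨l.flatten.length, ?_, mem_tuples.mpr ⟨rfl, fun _ _ => Finset.mem_univ _⟩⟩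
      refine Finset.mem_range.mpr (Nat.lt_succ_of_le ?_)
      rw [List.length_flatten]
      calc (l.map List.length).sum ≤ (l.map List.length).length • M := by
            refine List.sum_le_card_nsmul _ _ ?_
            intro x hx
            obtain ⟨y, hy, rfl⟩ := List.mem_map.mp hx
            exact Finset.le_sup (hmem y hy)
        _ = n * M := by rw [List.length_map, hlen, smul_eq_mul]
    have hle : ∑ s ∈ (tuples D n).image List.flatten, w s ≤
        ∑ s ∈ (Finset.range (n * M + 1)).biUnion (fun m => tuples (Finset.univ : Finset A) m), w s :=
      Finset.sum_le_sum_of_subset_of_nonneg hsubset (fun s _ _ => (hwpos s).le)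
    refine hle.trans ?_
    have hdisj : (↑(Finset.range (n * M + 1)) : Set ℕ).PairwiseDisjoint
        (fun m => tuples (Finset.univ : Finset A) m) := by
      intro a _ b _ hab
      refine Finset.disjoint_left.mpr ?_
      intro l hla hlb
      exact hab ((mem_tuples.mp hla).1 ▸ (mem_tuples.mp hlb).1.symm ▸ rfl)
    rw [Finset.sum_biUnion hdisj]
    have hone : ∀ m ∈ Finset.range (n * M + 1),
        ∑ s ∈ tuples (Finset.univ : Finset A) m, w s = 1 := by
      intro m _
      have : ∀ s ∈ tuples (Finset.univ : Finset A) m, w s = r ^ (-(m : ℤ)) := by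
        intro s hs
        rw [hw]
        simp only
        rw [(mem_tuples.mp hs).1]
      rw [Finset.sum_congr rfl this, Finset.sum_const, card_tuples, Finset.card_univ,
        nsmul_eq_mul]
      push_cast
      rw [← hr, ← zpow_natCast r m, ← zpow_add₀ hrne]
      simp
    rw [Finset.sum_congr rfl hone, Finset.sum_const, Finset.card_range, nsmul_eq_mul, mul_one]
    push_cast
    nlinarith [Nat.cast_nonneg (α := ℝ) (n * M)]
  exact pow_le_linear_imp_le_one hK0 key


/-- **Extended McMillan Theorem.** If `C` and `D` are uniquely decipherable codes over the
same finite nonempty alphabet, and every string in `C` is a concatenation of a finite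
sequence of strings in `D`, then `K(C) ≤ K(D)`. -/
theorem extended_mcmillan {A : Type*} [Fintype A] [Nonempty A]
    (C D : Finset (List A))
    (hC : UniquelyDecipherable C) (hD : UniquelyDecipherable D)
    (hCD : ∀ x ∈ C, ∃ w : List (List A), (∀ y ∈ w, y ∈ D) ∧ w.flatten = x) :
    kraftSum C ≤ kraftSum D := by
  classical
  set r : ℝ := (Fintype.card A : ℝ) with hr
  have hr0 : (0 : ℝ) < r := by
    have := Fintype.card_pos (α := A)
    positivity
  have hrne : r ≠ 0 := ne_of_gt hr0
  set w : List A → ℝ := fun x => r ^ (-(x.length : ℤ)) with hw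
  have hwpos : ∀ x : List A, 0 < w x := fun x => zpow_pos hr0 _
  have hKC : kraftSum C = ∑ x ∈ C, w x := rfl
  have hKD : kraftSum D = ∑ x ∈ D, w x := rfl
  have hKC0 : 0 ≤ kraftSum C := Finset.sum_nonneg fun x _ => (hwpos x).le
  have hKD0 : 0 ≤ kraftSum D := Finset.sum_nonneg fun x _ => (hwpos x).le
  have hKD1 : kraftSum D ≤ 1 := mcmillan D hD
  -- choose factorizations
  have hch : ∀ x : List A, ∃ v : List (List A),
      x ∈ C → ((∀ y ∈ v, y ∈ D) ∧ v.flatten = x) := by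
    intro x
    by_cases h : x ∈ C
    · obtain ⟨v, h1, h2⟩ := hCD x h
      exact ⟨v, fun _ => ⟨h1, h2⟩⟩
    · exact ⟨[], fun hx => absurd hx h⟩
  choose φ hφ using hch
  rcases Finset.eq_empty_or_nonempty C with rfl | ⟨c, hc⟩
  · simpa [kraftSum] using hKD0
  -- D is nonempty, kraftSum D > 0
  have hcne : c ≠ [] := fun h => nil_notMem hC (h ▸ hc)
  have hφc := hφ c hc
  have hφne : ∀ x ∈ C, φ x ≠ [] := by
    intro x hx h
    have h2 := (hφ x hx).2
    rw [h, List.flatten_nil] at h2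
    rw [← h2] at hx
    exact nil_notMem hC hx
  have hDne : D.Nonempty := by
    cases hh : φ c with
    | nil => exact absurd hh (hφne c hc)
    | cons a l => exact ⟨a, hφc.1 a (by simp [hh])⟩
  have hKDpos : 0 < kraftSum D := by
    obtain ⟨d, hd⟩ := hDne
    rw [hKD]
    exact Finset.sum_pos' (fun x _ => (hwpos x).le) ⟨d, hd, hwpos d⟩
  set L := C.sup (fun x => (φ x).length) with hL
  -- the key bound
  have key : ∀ n : ℕ, kraftSum C ^ n ≤ ((L : ℝ) * n + 1) * kraftSum D ^ n := by
    intro n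
    rw [hKC, ← sum_tuples C w n]
    set F : List (List A) → List (List A) := fun u => (u.map φ).flatten with hF
    have hflatF : ∀ u : List (List A), (∀ x ∈ u, x ∈ C) → (F u).flatten = u.flatten := by
      intro u hu
      rw [hF]
      simp only
      rw [List.flatten_flatten, List.map_map]
      congr 1
      calc u.map (List.flatten ∘ φ) = u.map id := by
            refine List.map_congr_left ?_
            intro x hx
            exact (hφ x (hu x hx)).2
        _ = u := List.map_id u
    have hwF : ∀ u ∈ tuples C n, (u.map w).prod = ((F u).map w).prod := by
      intro u hu
      have hu' := (mem_tuples.mp hu).2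
      rw [hF]
      simp only
      rw [List.map_flatten, List.prod_flatten, List.map_map, List.map_map]
      congr 1
      refine List.map_congr_left ?_
      intro x hx
      show w x = ((φ x).map w).prod
      rw [prod_w r hrne, (hφ x (hu' x hx)).2]
    rw [Finset.sum_congr rfl hwF]
    have hinj : ∀ u ∈ tuples C n, ∀ v ∈ tuples C n, F u = F v → u = v := by
      intro u hu v hv huv
      have h1 : (F u).flatten = (F v).flatten := by rw [huv]
      rw [hflatF u (mem_tuples.mp hu).2, hflatF v (mem_tuples.mp hv).2] at h1
      exact hC u v (mem_tuples.mp hu).2 (mem_tuples.mp hv).2 h1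
    rw [← Finset.sum_image (f := fun v => (List.map w v).prod) hinj]
    have hsubset : (tuples C n).image F ⊆
        (Finset.Icc n (n * L)).biUnion (fun m => tuples D m) := by
      intro v hv
      obtain ⟨u, hu, rfl⟩ := Finset.mem_image.mp hv
      obtain ⟨hlen, hmem⟩ := mem_tuples.mp hu
      have hmemD : ∀ y ∈ F u, y ∈ D := by
        intro y hy
        rw [hF] at hy
        simp only [List.mem_flatten, List.mem_map] at hy
        obtain ⟨l, ⟨x, hx, rfl⟩, hyl⟩ := hy
        exact (hφ x (hmem x hx)).1 y hyl
      refine Finset.mem_biUnion.mpr ⟨(F u).length, ?_,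
        mem_tuples.mpr ⟨rfl, hmemD⟩⟩
      refine Finset.mem_Icc.mpr ⟨?_, ?_⟩
      · rw [hF]
        simp only
        rw [List.length_flatten, List.map_map]
        calc n = (u.map (List.length ∘ φ)).length • 1 := by
              simp [hlen]
          _ ≤ (u.map (List.length ∘ φ)).sum := by
              refine List.card_nsmul_le_sum _ _ ?_
              intro x hx
              obtain ⟨y, hy, rfl⟩ := List.mem_map.mp hx
              exact List.length_pos_iff.mpr (hφne y (hmem y hy))
      · rw [hF]
        simp only
        rw [List.length_flatten, List.map_map]
        calc (u.map (List.length ∘ φ)).sum ≤ (u.map (List.length ∘ φ)).length • L := by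
              refine List.sum_le_card_nsmul _ _ ?_
              intro x hx
              obtain ⟨y, hy, rfl⟩ := List.mem_map.mp hx
              exact Finset.le_sup (f := fun x => (φ x).length) (hmem y hy)
          _ = n * L := by rw [List.length_map, hlen, smul_eq_mul]
    have hle := Finset.sum_le_sum_of_subset_of_nonneg (f := fun v => (List.map w v).prod) hsubset
      (fun v _ _ => List.prod_nonneg (by
        intro x hx
        obtain ⟨y, _, rfl⟩ := List.mem_map.mp hx
        exact (hwpos y).le))
    refine hle.trans ?_
    have hdisj : (↑(Finset.Icc n (n * L)) : Set ℕ).PairwiseDisjoint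
        (fun m => tuples D m) := by
      intro a _ b _ hab
      refine Finset.disjoint_left.mpr ?_
      intro l hla hlb
      exact hab ((mem_tuples.mp hla).1 ▸ (mem_tuples.mp hlb).1.symm ▸ rfl)
    rw [Finset.sum_biUnion hdisj]
    have hterm : ∀ m ∈ Finset.Icc n (n * L),
        ∑ v ∈ tuples D m, (v.map w).prod ≤ kraftSum D ^ n := by
      intro m hm
      rw [sum_tuples D w m, ← hKD]
      exact pow_le_pow_of_le_one hKD0 hKD1 (Finset.mem_Icc.mp hm).1
    calc ∑ m ∈ Finset.Icc n (n * L), ∑ v ∈ tuples D m, (v.map w).prod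
        ≤ ∑ _m ∈ Finset.Icc n (n * L), kraftSum D ^ n := Finset.sum_le_sum hterm
      _ = (Finset.Icc n (n * L)).card * kraftSum D ^ n := by
          rw [Finset.sum_const, nsmul_eq_mul]
      _ ≤ ((L : ℝ) * n + 1) * kraftSum D ^ n := by
          refine mul_le_mul_of_nonneg_right ?_ (pow_nonneg hKD0 n)
          rw [Nat.card_Icc]
          have h1 : n * L + 1 - n ≤ n * L + 1 := Nat.sub_le _ _
          calc ((n * L + 1 - n : ℕ) : ℝ) ≤ ((n * L + 1 : ℕ) : ℝ) := by exact_mod_cast h1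
            _ = (L : ℝ) * n + 1 := by push_cast; ring
  -- conclude via the growth lemma
  have hy : kraftSum C / kraftSum D ≤ 1 := by
    refine pow_le_linear_imp_le_one (a := (L : ℝ)) (b := 1) (by positivity) ?_
    intro n
    rw [div_pow, div_le_iff₀ (by positivity)]
    exact (key n).trans_eq (by ring)
  exact (div_le_one hKDpos).mp hy
end

section
/- Inequality (7): Let C and D be nonempty uniquely decipherable codes over a finite nonempty alphabet A with r elements, such that every string in C is a concatenation of a finite sequence of strings in D. Let m be the largest integer n such that some element of C is the concatenation of a sequence of n strings from D. Then for every positive integer k, K(C)^k ≤ Σ_{l=k}^{mk} K(D)^l. -/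
open Classical in
noncomputable def tuplesAux {A : Type*} (E : Finset (List A)) : ℕ → Finset (List (List A))
  | 0 => {[]}
  | n + 1 => (E ×ˢ tuplesAux E n).image fun p => p.1 :: p.2

lemma mem_tuplesAux {A : Type*} (E : Finset (List A)) (n : ℕ) (w : List (List A)) :
    w ∈ tuplesAux E n ↔ w.length = n ∧ ∀ x ∈ w, x ∈ E := by
  induction n generalizing w with
  | zero => cases w <;> simp [tuplesAux]
  | succ n ih =>
    cases w with
    | nil => simp [tuplesAux]
    | cons a w =>
      simp only [tuplesAux, Finset.mem_image, Finset.mem_product, Prod.exists]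
      constructor
      · rintro ⟨x, v, ⟨hx, hv⟩, h⟩
        obtain ⟨rfl, rfl⟩ := List.cons.injEq x v a w ▸ h
        have := (ih v).1 hv
        simp_all
      · rintro ⟨hlen, hmem⟩
        exact ⟨a, w, ⟨hmem a (by simp), (ih w).2 ⟨by simpa using hlen,
          fun x hx => hmem x (by simp [hx])⟩⟩, rfl⟩

lemma sum_tuplesAux {A : Type*} [Fintype A] [Nonempty A] (E : Finset (List A)) (n : ℕ) :
    ∑ w ∈ tuplesAux E n, (Fintype.card A : ℝ) ^ (-(w.flatten.length : ℤ)) = kraftSum E ^ n := by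
  classical
  have hr : (Fintype.card A : ℝ) ≠ 0 := by exact_mod_cast Fintype.card_ne_zero
  induction n with
  | zero => simp [tuplesAux]
  | succ n ih =>
    rw [tuplesAux, Finset.sum_image (by rintro ⟨a, u⟩ _ ⟨b, v⟩ _ h; simpa using h)]
    rw [Finset.sum_product]
    have key : ∀ (a : List A) (u : List (List A)),
        (Fintype.card A : ℝ) ^ (-(((a :: u).flatten).length : ℤ))
          = (Fintype.card A : ℝ) ^ (-(a.length : ℤ)) *
            (Fintype.card A : ℝ) ^ (-(u.flatten.length : ℤ)) := by
      intro a u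
      rw [← zpow_add₀ hr]
      congr 1
      simp only [List.flatten_cons, List.length_append]
      push_cast
      ring
    simp only [key, ← Finset.mul_sum, ← Finset.sum_mul, ih]
    rw [pow_succ, kraftSum]
    ring

/-- **Inequality (7).** For nonempty uniquely decipherable codes `C ⊆ D̄` with `m` the largest
number of `D`-factors of an element of `C`, we have `K(C)^k ≤ Σ_{l=k}^{mk} K(D)^l`. -/
theorem kraft_pow_le_sum_pow {A : Type*} [Fintype A] [Nonempty A]
    (C D : Finset (List A)) (hCne : C.Nonempty) (hDne : D.Nonempty)
    (hC : UniquelyDecipherable C) (hD : UniquelyDecipherable D)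
    (hCD : ∀ x ∈ C, ∃ w : List (List A), (∀ y ∈ w, y ∈ D) ∧ w.flatten = x)
    (m : ℕ)
    (hm : ∃ x ∈ C, ∃ w : List (List A), (∀ y ∈ w, y ∈ D) ∧ w.flatten = x ∧ w.length = m)
    (hmax : ∀ n : ℕ,
      (∃ x ∈ C, ∃ w : List (List A), (∀ y ∈ w, y ∈ D) ∧ w.flatten = x ∧ w.length = n) → n ≤ m)
    (k : ℕ) (hk : 0 < k) :
    kraftSum C ^ k ≤ ∑ l ∈ Finset.Icc k (m * k), kraftSum D ^ l := by
  classical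
  set r : ℝ := (Fintype.card A : ℝ) with hr
  have hrpos : (0 : ℝ) < r := by
    rw [hr]; exact_mod_cast Fintype.card_pos
  set f : List (List A) → ℝ := fun w => r ^ (-(w.flatten.length : ℤ)) with hf
  have hfpos : ∀ w, 0 < f w := fun w => zpow_pos hrpos _
  -- the empty string is not in C
  have hnil : ([] : List A) ∉ C := by
    intro h
    have := hC [[]] [] (by simpa using h) (by simp) (by simp)
    simp at this
  -- decomposition function
  set dec : List A → List (List A) :=
    fun x => if h : x ∈ C then (hCD x h).choose else [] with hdec
  have hdecD : ∀ x ∈ C, ∀ y ∈ dec x, y ∈ D := by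
    intro x hx y hy
    rw [hdec] at hy; simp only [dif_pos hx] at hy
    exact (hCD x hx).choose_spec.1 y hy
  have hdecfl : ∀ x ∈ C, (dec x).flatten = x := by
    intro x hx
    rw [hdec]; simp only [dif_pos hx]
    exact (hCD x hx).choose_spec.2
  have hdec1 : ∀ x ∈ C, 1 ≤ (dec x).length := by
    intro x hx
    rcases Nat.eq_zero_or_pos (dec x).length with h | h
    · exfalso
      have hd : dec x = [] := List.length_eq_zero_iff.mp h
      have := hdecfl x hx
      rw [hd] at this; simp only [List.flatten_nil] at this
      exact hnil (this ▸ hx)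
    · exact h
  have hdecm : ∀ x ∈ C, (dec x).length ≤ m := by
    intro x hx
    exact hmax _ ⟨x, hx, dec x, hdecD x hx, hdecfl x hx, rfl⟩
  set Φ : List (List A) → List (List A) := fun w => (w.map dec).flatten with hΦ
  have hΦfl : ∀ w : List (List A), (∀ x ∈ w, x ∈ C) → (Φ w).flatten = w.flatten := by
    intro w hw
    induction w with
    | nil => rfl
    | cons a w ih =>
      simp only [hΦ, List.map_cons, List.flatten_cons, List.flatten_append]
      rw [hdecfl a (hw a (by simp))]
      have := ih (fun x hx => hw x (by simp [hx]))
      simp only [hΦ] at this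
      rw [this]
  have hΦlen : ∀ w : List (List A), (∀ x ∈ w, x ∈ C) →
      w.length ≤ (Φ w).length ∧ (Φ w).length ≤ m * w.length := by
    intro w hw
    induction w with
    | nil => simp [hΦ]
    | cons a w ih =>
      obtain ⟨ih1, ih2⟩ := ih (fun x hx => hw x (by simp [hx]))
      have ha : a ∈ C := hw a (by simp)
      simp only [hΦ, List.map_cons, List.flatten_cons, List.length_append,
        List.length_cons] at *
      constructor
      · have := hdec1 a ha; omega
      · have := hdecm a ha
        have : (dec a).length + (w.map dec).flatten.length ≤ m + m * w.length := by omega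
        calc (dec a).length + (w.map dec).flatten.length ≤ m + m * w.length := this
          _ = m * (w.length + 1) := by ring
  have hΦD : ∀ w : List (List A), (∀ x ∈ w, x ∈ C) → ∀ y ∈ Φ w, y ∈ D := by
    intro w hw y hy
    simp only [hΦ, List.mem_flatten, List.mem_map] at hy
    obtain ⟨l, ⟨x, hx, rfl⟩, hyl⟩ := hy
    exact hdecD x (hw x hx) y hyl
  -- main computation
  rw [← sum_tuplesAux C k]
  have hmemC : ∀ w ∈ tuplesAux C k, (∀ x ∈ w, x ∈ C) ∧ w.length = k := by
    intro w hw
    obtain ⟨h1, h2⟩ := (mem_tuplesAux C k w).1 hw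
    exact ⟨h2, h1⟩
  have step1 : ∑ w ∈ tuplesAux C k, f w = ∑ v ∈ (tuplesAux C k).image Φ, f v := by
    rw [Finset.sum_image]
    · refine Finset.sum_congr rfl fun w hw => ?_
      simp only [hf]
      rw [hΦfl w (hmemC w hw).1]
    · intro w hw v hv hwv
      exact hC w v (hmemC w hw).1 (hmemC v hv).1
        (by rw [← hΦfl w (hmemC w hw).1, ← hΦfl v (hmemC v hv).1, hwv])
  rw [show (∑ w ∈ tuplesAux C k, r ^ (-(w.flatten.length : ℤ))) = ∑ w ∈ tuplesAux C k, f w from rfl,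
    step1]
  have hsub : (tuplesAux C k).image Φ ⊆ (Finset.Icc k (m * k)).biUnion (tuplesAux D) := by
    intro v hv
    obtain ⟨w, hw, rfl⟩ := Finset.mem_image.1 hv
    obtain ⟨hwC, hwk⟩ := hmemC w hw
    obtain ⟨h1, h2⟩ := hΦlen w hwC
    refine Finset.mem_biUnion.2 ⟨(Φ w).length, ?_, ?_⟩
    · rw [Finset.mem_Icc]; constructor
      · omega
      · rw [← hwk]; omega
    · exact (mem_tuplesAux D _ _).2 ⟨rfl, hΦD w hwC⟩
  calc ∑ v ∈ (tuplesAux C k).image Φ, f v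
      ≤ ∑ v ∈ (Finset.Icc k (m * k)).biUnion (tuplesAux D), f v :=
        Finset.sum_le_sum_of_subset_of_nonneg hsub (fun v _ _ => (hfpos v).le)
    _ = ∑ l ∈ Finset.Icc k (m * k), ∑ v ∈ tuplesAux D l, f v := by
        rw [Finset.sum_biUnion]
        intro l₁ h₁ l₂ h₂ hne
        simp only [Finset.disjoint_left]
        intro v hv1 hv2
        have e1 := ((mem_tuplesAux D l₁ v).1 hv1).1
        have e2 := ((mem_tuplesAux D l₂ v).1 hv2).1
        exact absurd (e1 ▸ e2) (by omega)
    _ = ∑ l ∈ Finset.Icc k (m * k), kraftSum D ^ l :=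
        Finset.sum_congr rfl fun l _ => sum_tuplesAux D l
end

section
/- Inequality (8): Let C and D be nonempty uniquely decipherable codes over a finite nonempty alphabet A with r elements, such that every string in C is a concatenation of a finite sequence of strings in D. Let m be the largest integer n such that some element of C is the concatenation of a sequence of n strings from D. Then for every positive integer k, K(C)^k ≤ mk · K(D)^k. -/
set_option linter.unusedSectionVars false
namespace KraftIneq
variable {A : Type*} [Fintype A] [Nonempty A]

noncomputable def g (x : List A) : ℝ := ((Fintype.card A : ℝ))⁻¹ ^ x.length

lemma r_pos : (0:ℝ) < Fintype.card A := by
  exact_mod_cast Fintype.card_pos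

lemma g_nonneg (x : List A) : 0 ≤ g x := by
  unfold g; positivity

lemma g_le_one (x : List A) : g x ≤ 1 := by
  unfold g
  apply pow_le_one₀ (by positivity)
  rw [inv_le_one_iff₀]
  right
  exact_mod_cast Fintype.card_pos

lemma g_append (x y : List A) : g (x ++ y) = g x * g y := by
  simp [g, List.length_append, pow_add]

lemma g_flatten (l : List (List A)) : g l.flatten = (l.map g).prod := by
  induction l with
  | nil => simp [g]
  | cons x l ih => simp [List.flatten_cons, g_append, ih]

lemma kraftSum_eq (C : Finset (List A)) :
    (∑ x ∈ C, (Fintype.card A : ℝ) ^ (-(x.length : ℤ))) = ∑ x ∈ C, g x := by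
  refine Finset.sum_congr rfl fun x _ => ?_
  rw [zpow_neg, zpow_natCast, ← inv_pow, g]

lemma sum_prod_pi (D : Finset (List A)) (n : ℕ) :
    ∑ f ∈ Fintype.piFinset (fun _ : Fin n => D), g (List.ofFn f).flatten
      = (∑ x ∈ D, g x) ^ n := by
  classical
  have h := Finset.prod_univ_sum (fun _ : Fin n => D) (fun _ (x : List A) => g x)
  rw [Finset.prod_const, Finset.card_univ, Fintype.card_fin] at h
  rw [h]
  refine Finset.sum_congr rfl fun f _ => ?_
  rw [g_flatten, List.map_ofFn, List.prod_ofFn]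
  rfl

lemma card_length_le (T : Finset (List A)) (L : ℕ) :
    ((T.filter (fun s => s.length = L)).card : ℝ) ≤ (Fintype.card A : ℝ) ^ L := by
  classical
  have h : (T.filter (fun s => s.length = L)).card ≤ Fintype.card (Fin L → A) := by
    apply Finset.card_le_card_of_injOn
      (fun s (i : Fin L) => s.getD i.val (Classical.arbitrary A))
    · intro s _; exact Finset.mem_univ _
    · intro s hs t ht hst
      simp only [Finset.mem_coe, Finset.mem_filter] at hs ht
      apply List.ext_getElem (by rw [hs.2, ht.2])
      intro i h1 h2
      have hi : i < L := by rw [← hs.2]; exact h1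
      have := congrFun hst ⟨i, hi⟩
      simpa [List.getD_eq_getElem, h1, h2] using this
  calc ((T.filter (fun s => s.length = L)).card : ℝ)
      ≤ (Fintype.card (Fin L → A) : ℝ) := by exact_mod_cast h
    _ = (Fintype.card A : ℝ) ^ L := by
        rw [Fintype.card_fun, Fintype.card_fin]; push_cast; ring

lemma sum_g_le (T : Finset (List A)) (N : ℕ) (hT : ∀ s ∈ T, s.length ≤ N) :
    ∑ s ∈ T, g s ≤ N + 1 := by
  classical
  have hmaps : ∀ s ∈ T, s.length ∈ Finset.range (N + 1) := by
    intro s hs; rw [Finset.mem_range]; exact Nat.lt_succ_of_le (hT s hs)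
  rw [← Finset.sum_fiberwise_of_maps_to hmaps]
  have hub : ∀ L ∈ Finset.range (N + 1),
      ∑ s ∈ T.filter (fun s => s.length = L), g s ≤ 1 := by
    intro L _
    have h1 : ∑ s ∈ T.filter (fun s => s.length = L), g s
        = ((T.filter (fun s => s.length = L)).card : ℝ) * ((Fintype.card A : ℝ))⁻¹ ^ L := by
      rw [Finset.sum_congr rfl (fun s hs => ?_), Finset.sum_const, nsmul_eq_mul]
      rw [Finset.mem_filter] at hs
      rw [g, hs.2]
    rw [h1]
    calc ((T.filter (fun s => s.length = L)).card : ℝ) * ((Fintype.card A : ℝ))⁻¹ ^ L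
        ≤ (Fintype.card A : ℝ) ^ L * ((Fintype.card A : ℝ))⁻¹ ^ L := by
          apply mul_le_mul_of_nonneg_right (card_length_le T L) (by positivity)
      _ = 1 := by
          rw [← mul_pow, mul_inv_cancel₀ (ne_of_gt r_pos), one_pow]
  calc ∑ L ∈ Finset.range (N + 1), ∑ s ∈ T.filter (fun s => s.length = L), g s
      ≤ ∑ _L ∈ Finset.range (N + 1), (1:ℝ) := Finset.sum_le_sum hub
    _ = N + 1 := by simp

lemma ud_not_nil_mem {D : Finset (List A)} (hD : UniquelyDecipherable D) : [] ∉ D := by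
  intro h
  have := hD [[]] [] (by simpa using h) (by simp) (by simp)
  simp at this

lemma kraft_le_one (D : Finset (List A)) (hD : UniquelyDecipherable D) :
    (∑ x ∈ D, g x) ≤ 1 := by
  classical
  rcases D.eq_empty_or_nonempty with rfl | hne
  · simp
  set K : ℝ := ∑ x ∈ D, g x with hK
  have hK0 : 0 ≤ K := Finset.sum_nonneg fun x _ => g_nonneg x
  set ℓ : ℕ := D.sup List.length with hℓ
  -- key bound: K ^ n ≤ n * ℓ + 1
  have key : ∀ n : ℕ, K ^ n ≤ n * ℓ + 1 := by
    intro n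
    rw [← sum_prod_pi]
    set φ : (Fin n → List A) → List A := fun f => (List.ofFn f).flatten with hφ
    have hinj : ∀ f ∈ Fintype.piFinset (fun _ : Fin n => D),
        ∀ f' ∈ Fintype.piFinset (fun _ : Fin n => D), φ f = φ f' → f = f' := by
      intro f hf f' hf' he
      rw [Fintype.mem_piFinset] at hf hf'
      have := hD (List.ofFn f) (List.ofFn f')
        (by intro x hx; rw [List.mem_ofFn] at hx; obtain ⟨i, rfl⟩ := hx; exact hf i)
        (by intro x hx; rw [List.mem_ofFn] at hx; obtain ⟨i, rfl⟩ := hx; exact hf' i) he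
      exact List.ofFn_inj.mp this
    rw [show ∑ f ∈ Fintype.piFinset (fun _ : Fin n => D), g (List.ofFn f).flatten
        = ∑ s ∈ (Fintype.piFinset (fun _ : Fin n => D)).image φ, g s from
      (Finset.sum_image hinj).symm]
    have hlen : ∀ s ∈ (Fintype.piFinset (fun _ : Fin n => D)).image φ, s.length ≤ n * ℓ := by
      intro s hs
      rw [Finset.mem_image] at hs
      obtain ⟨f, hf, rfl⟩ := hs
      rw [Fintype.mem_piFinset] at hf
      rw [hφ]
      simp only [List.length_flatten, List.map_ofFn]
      rw [List.sum_ofFn]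
      calc ∑ i : Fin n, (List.length ∘ f) i ≤ ∑ _i : Fin n, ℓ :=
            Finset.sum_le_sum fun i _ => Finset.le_sup (hf i)
        _ = n * ℓ := by simp [Finset.sum_const, mul_comm]
    have := sum_g_le _ (n * ℓ) hlen
    calc ∑ s ∈ (Fintype.piFinset (fun _ : Fin n => D)).image φ, g s
        ≤ (n * ℓ : ℕ) + 1 := this
      _ = n * ℓ + 1 := by push_cast; ring
  by_contra hgt
  push_neg at hgt
  set e : ℝ := K - 1 with he
  have he0 : 0 < e := by linarith
  obtain ⟨N, hN⟩ := exists_nat_gt ((2 * (ℓ + 1)) / e ^ 2)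
  have hN1 : (N:ℝ) * e ^ 2 > 2 * (ℓ + 1) := by
    rw [div_lt_iff₀ (by positivity)] at hN
    linarith
  -- K ^ (2N) ≥ (N e)^2
  have h1 : ((N:ℝ) * e) ^ 2 ≤ K ^ (2 * N) := by
    have hb : 1 + (N:ℝ) * e ≤ K ^ N := by
      have := one_add_mul_le_pow (a := e) (by linarith) N
      rw [show (1:ℝ) + e = K by rw [he]; ring] at this
      linarith
    calc ((N:ℝ) * e) ^ 2 ≤ (1 + (N:ℝ) * e) ^ 2 := by
          apply pow_le_pow_left₀ (by positivity); linarith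
      _ ≤ (K ^ N) ^ 2 := by
          apply pow_le_pow_left₀ (by positivity); exact hb
      _ = K ^ (2 * N) := by rw [← pow_mul, mul_comm]
  have h2 := key (2 * N)
  have h3 : (N:ℝ)^2 * e^2 ≤ 2 * N * ℓ + 1 := by
    rw [mul_pow] at h1
    calc (N:ℝ)^2 * e^2 ≤ K ^ (2*N) := h1
      _ ≤ (2*N : ℕ) * ℓ + 1 := h2
      _ = 2 * N * ℓ + 1 := by push_cast; ring
  -- 2Nℓ + 1 ≤ 2N(ℓ+1) when N ≥ 1 ... handle N = 0 separately
  have hN0 : 1 ≤ N := by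
    by_contra h
    push_neg at h
    interval_cases N
    · simp at hN1; nlinarith
  have h4 : (N:ℝ) * (N * e^2) ≤ N * (2 * (ℓ + 1)) := by
    have h5 : (2:ℝ) * N * ℓ + 1 ≤ N * (2 * (ℓ + 1)) := by
      have : (1:ℝ) ≤ N := by exact_mod_cast hN0
      nlinarith
    nlinarith
  have hNpos : (0:ℝ) < N := by exact_mod_cast hN0
  have := (mul_le_mul_iff_right₀ hNpos).mp h4
  linarith

omit [Nonempty A] in
lemma flatten_flatten_map {w : List A → List (List A)} (l : List (List A))
    (h : ∀ x ∈ l, (w x).flatten = x) : ((l.map w).flatten).flatten = l.flatten := by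
  induction l with
  | nil => simp
  | cons x l ih =>
      simp only [List.map_cons, List.flatten_cons, List.flatten_append]
      rw [h x (by simp), ih (fun y hy => h y (by simp [hy]))]

end KraftIneq

set_option maxHeartbeats 1000000 in
/-- **Inequality (8).** For nonempty uniquely decipherable codes `C ⊆ D̄` with `m` the largest
number of `D`-factors of an element of `C`, we have `K(C)^k ≤ mk · K(D)^k`. -/
theorem kraft_pow_le_mul_pow {A : Type*} [Fintype A] [Nonempty A]
    (C D : Finset (List A)) (hCne : C.Nonempty) (hDne : D.Nonempty)
    (hC : UniquelyDecipherable C) (hD : UniquelyDecipherable D)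
    (hCD : ∀ x ∈ C, ∃ w : List (List A), (∀ y ∈ w, y ∈ D) ∧ w.flatten = x)
    (m : ℕ)
    (hm : ∃ x ∈ C, ∃ w : List (List A), (∀ y ∈ w, y ∈ D) ∧ w.flatten = x ∧ w.length = m)
    (hmax : ∀ n : ℕ,
      (∃ x ∈ C, ∃ w : List (List A), (∀ y ∈ w, y ∈ D) ∧ w.flatten = x ∧ w.length = n) → n ≤ m)
    (k : ℕ) (hk : 0 < k) :
    kraftSum C ^ k ≤ (m * k : ℕ) * kraftSum D ^ k := by
  classical
  rw [kraftSum, kraftSum, KraftIneq.kraftSum_eq, KraftIneq.kraftSum_eq]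
  have hDnil : [] ∉ D := KraftIneq.ud_not_nil_mem hD
  have hCnil : [] ∉ C := KraftIneq.ud_not_nil_mem hC
  choose! w hwD hwf using hCD
  have hwle : ∀ x ∈ C, (w x).length ≤ m := fun x hx =>
    hmax _ ⟨x, hx, w x, hwD x hx, hwf x hx, rfl⟩
  have hwge : ∀ x ∈ C, 1 ≤ (w x).length := by
    intro x hx
    rcases Nat.eq_zero_or_pos (w x).length with h0 | h
    · exfalso
      rw [List.length_eq_zero_iff] at h0
      have := hwf x hx
      rw [h0] at this
      simp at this
      exact hCnil (this ▸ hx)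
    · exact h
  -- the factorization of a k-tuple
  set Φ : (Fin k → List A) → List (List A) := fun f => ((List.ofFn f).map w).flatten with hΦ
  have hΦD : ∀ f ∈ Fintype.piFinset (fun _ : Fin k => C), ∀ y ∈ Φ f, y ∈ D := by
    intro f hf y hy
    rw [Fintype.mem_piFinset] at hf
    rw [hΦ, List.mem_flatten] at hy
    obtain ⟨l, hl, hyl⟩ := hy
    rw [List.mem_map] at hl
    obtain ⟨x, hx, rfl⟩ := hl
    rw [List.mem_ofFn] at hx
    obtain ⟨i, rfl⟩ := hx
    exact hwD _ (hf i) y hyl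
  have hΦflat : ∀ f ∈ Fintype.piFinset (fun _ : Fin k => C),
      (Φ f).flatten = (List.ofFn f).flatten := by
    intro f hf
    rw [Fintype.mem_piFinset] at hf
    apply KraftIneq.flatten_flatten_map
    intro x hx
    rw [List.mem_ofFn] at hx
    obtain ⟨i, rfl⟩ := hx
    exact hwf _ (hf i)
  have hΦlen : ∀ f, (Φ f).length = ∑ i : Fin k, (w (f i)).length := by
    intro f
    rw [hΦ]
    simp only [List.length_flatten, List.map_map]
    rw [show List.map (List.length ∘ w) (List.ofFn f) = List.ofFn (fun i => (w (f i)).length)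
      from by rw [List.map_ofFn]; rfl]
    rw [List.sum_ofFn]
  have hmapsto : ∀ f ∈ Fintype.piFinset (fun _ : Fin k => C),
      (Φ f).length ∈ Finset.Icc k (m * k) := by
    intro f hf
    have hfC := Fintype.mem_piFinset.mp hf
    rw [Finset.mem_Icc, hΦlen]
    constructor
    · calc k = ∑ _i : Fin k, 1 := by simp
        _ ≤ ∑ i : Fin k, (w (f i)).length :=
            Finset.sum_le_sum fun i _ => hwge _ (hfC i)
    · calc ∑ i : Fin k, (w (f i)).length ≤ ∑ _i : Fin k, m :=
            Finset.sum_le_sum fun i _ => hwle _ (hfC i)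
        _ = m * k := by simp [mul_comm]
  have hKD0 : 0 ≤ ∑ x ∈ D, KraftIneq.g x := Finset.sum_nonneg fun x _ => KraftIneq.g_nonneg x
  have hKD1 : (∑ x ∈ D, KraftIneq.g x) ≤ 1 := KraftIneq.kraft_le_one D hD
  -- fiber bound
  have fiber : ∀ n ∈ Finset.Icc k (m * k),
      ∑ f ∈ (Fintype.piFinset (fun _ : Fin k => C)).filter (fun f => (Φ f).length = n),
        KraftIneq.g (List.ofFn f).flatten ≤ (∑ x ∈ D, KraftIneq.g x) ^ k := by
    intro n hn
    rw [Finset.mem_Icc] at hn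
    set S := (Fintype.piFinset (fun _ : Fin k => C)).filter (fun f => (Φ f).length = n) with hS
    set ψ : (Fin k → List A) → (Fin n → List A) := fun f i => (Φ f).getD i [] with hψ
    have hofFnψ : ∀ f ∈ S, List.ofFn (ψ f) = Φ f := by
      intro f hf
      rw [hS, Finset.mem_filter] at hf
      apply List.ext_getElem (by simp [hf.2])
      intro i h1 h2
      simp only [List.getElem_ofFn]
      show (Φ f).getD i [] = _
      rw [List.getD_eq_getElem _ _ (by simpa using h2)]
    have hψmem : ∀ f ∈ S, ψ f ∈ Fintype.piFinset (fun _ : Fin n => D) := by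
      intro f hf
      have hfpi : f ∈ Fintype.piFinset (fun _ : Fin k => C) :=
        (Finset.mem_filter.mp hf).1
      rw [Fintype.mem_piFinset]
      intro i
      have : (ψ f) i ∈ List.ofFn (ψ f) := by
        rw [List.mem_ofFn]; exact ⟨i, rfl⟩
      rw [hofFnψ f hf] at this
      exact hΦD f hfpi _ this
    have hψinj : ∀ f ∈ S, ∀ f' ∈ S, ψ f = ψ f' → f = f' := by
      intro f hf f' hf' he
      have h1 : Φ f = Φ f' := by
        rw [← hofFnψ f hf, ← hofFnψ f' hf', he]
      have hfpi : f ∈ Fintype.piFinset (fun _ : Fin k => C) := (Finset.mem_filter.mp hf).1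
      have hfpi' : f' ∈ Fintype.piFinset (fun _ : Fin k => C) := (Finset.mem_filter.mp hf').1
      have h2 : (List.ofFn f).flatten = (List.ofFn f').flatten := by
        rw [← hΦflat f hfpi, ← hΦflat f' hfpi', h1]
      have hfC := Fintype.mem_piFinset.mp hfpi
      have hfC' := Fintype.mem_piFinset.mp hfpi'
      have := hC (List.ofFn f) (List.ofFn f')
        (by intro x hx; rw [List.mem_ofFn] at hx; obtain ⟨i, rfl⟩ := hx; exact hfC i)
        (by intro x hx; rw [List.mem_ofFn] at hx; obtain ⟨i, rfl⟩ := hx; exact hfC' i) h2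
      exact List.ofFn_inj.mp this
    have hterm : ∀ f ∈ S, KraftIneq.g (List.ofFn f).flatten
        = KraftIneq.g (List.ofFn (ψ f)).flatten := by
      intro f hf
      have hfpi : f ∈ Fintype.piFinset (fun _ : Fin k => C) := (Finset.mem_filter.mp hf).1
      rw [hofFnψ f hf, hΦflat f hfpi]
    calc ∑ f ∈ S, KraftIneq.g (List.ofFn f).flatten
        = ∑ f ∈ S, KraftIneq.g (List.ofFn (ψ f)).flatten :=
          Finset.sum_congr rfl hterm
      _ = ∑ h ∈ S.image ψ, KraftIneq.g (List.ofFn h).flatten :=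
          (Finset.sum_image (f := fun h => KraftIneq.g (List.ofFn h).flatten) hψinj).symm
      _ ≤ ∑ h ∈ Fintype.piFinset (fun _ : Fin n => D), KraftIneq.g (List.ofFn h).flatten := by
          apply Finset.sum_le_sum_of_subset_of_nonneg
          · intro h hh
            rw [Finset.mem_image] at hh
            obtain ⟨f, hf, rfl⟩ := hh
            exact hψmem f hf
          · intro h _ _; exact KraftIneq.g_nonneg _
      _ = (∑ x ∈ D, KraftIneq.g x) ^ n := KraftIneq.sum_prod_pi D n
      _ ≤ (∑ x ∈ D, KraftIneq.g x) ^ k := pow_le_pow_of_le_one hKD0 hKD1 hn.1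
  calc (∑ x ∈ C, KraftIneq.g x) ^ k
      = ∑ f ∈ Fintype.piFinset (fun _ : Fin k => C), KraftIneq.g (List.ofFn f).flatten :=
        (KraftIneq.sum_prod_pi C k).symm
    _ = ∑ n ∈ Finset.Icc k (m * k),
          ∑ f ∈ (Fintype.piFinset (fun _ : Fin k => C)).filter (fun f => (Φ f).length = n),
            KraftIneq.g (List.ofFn f).flatten :=
        (Finset.sum_fiberwise_of_maps_to hmapsto _).symm
    _ ≤ ∑ _n ∈ Finset.Icc k (m * k), (∑ x ∈ D, KraftIneq.g x) ^ k :=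
        Finset.sum_le_sum fiber
    _ = ((Finset.Icc k (m * k)).card : ℝ) * (∑ x ∈ D, KraftIneq.g x) ^ k := by
        rw [Finset.sum_const, nsmul_eq_mul]
    _ ≤ ((m * k : ℕ) : ℝ) * (∑ x ∈ D, KraftIneq.g x) ^ k := by
        apply mul_le_mul_of_nonneg_right _ (by positivity)
        rw [Nat.card_Icc]
        have : m * k + 1 - k ≤ m * k := by
          have h1 : 1 ≤ m := by
            obtain ⟨x, hx⟩ := hCne
            exact le_trans (hwge x hx) (hwle x hx)
          omega
        exact_mod_cast this
end

section
/- Let C and D be uniquely decipherable codes over a finite nonempty alphabet A with r elements, such that every string in C is a concatenation of a finite sequence of strings in D, and let k be a positive integer. Then for every sequence v of k strings from C there is exactly one finite sequence w of strings from D with con(w) = con(v); consequently Σ_{w} r^{-len(con(w))} = K(C)^k, where the sum ranges over all finite sequences w of strings from D whose concatenation lies in con[C^k] = {con(v) : v ∈ C^k}. -/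
/-- If `C` and `D` are uniquely decipherable codes with every string of `C` a concatenation
of strings in `D`, then every sequence `v` of `k` strings from `C` has a unique
`D`-factorization of its concatenation; consequently the sum of `r^{-len(con(w))}` over all
sequences `w` of strings from `D` with `con(w) ∈ con[C^k]` equals `K(C)^k`. -/
theorem unique_factorization_and_sum {A : Type*} [Fintype A] [Nonempty A]
    (C D : Finset (List A))
    (hC : UniquelyDecipherable C) (hD : UniquelyDecipherable D)
    (hCD : ∀ x ∈ C, ∃ w : List (List A), (∀ y ∈ w, y ∈ D) ∧ w.flatten = x)
    (k : ℕ) (hk : 0 < k) :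
    (∀ v : List (List A), (∀ x ∈ v, x ∈ C) → v.length = k →
      ∃! w : List (List A), (∀ y ∈ w, y ∈ D) ∧ w.flatten = v.flatten) ∧
    ∑' w : {w : List (List A) // (∀ y ∈ w, y ∈ D) ∧
        ∃ v : List (List A), (∀ x ∈ v, x ∈ C) ∧ v.length = k ∧ v.flatten = w.flatten},
      (Fintype.card A : ℝ) ^ (-(((w : List (List A)).flatten.length : ℤ))) =
      kraftSum C ^ k := by
  classical
  set r : ℝ := (Fintype.card A : ℝ) with hr
  have hr0 : r ≠ 0 := by
    have : 0 < Fintype.card A := Fintype.card_pos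
    positivity
  -- Part 1: unique factorization (length hypothesis not needed)
  have part1 : ∀ v : List (List A), (∀ x ∈ v, x ∈ C) →
      ∃! w : List (List A), (∀ y ∈ w, y ∈ D) ∧ w.flatten = v.flatten := by
    intro v hv
    have hex : ∃ w : List (List A), (∀ y ∈ w, y ∈ D) ∧ w.flatten = v.flatten := by
      induction v with
      | nil => exact ⟨[], by simp, by simp⟩
      | cons a t ih =>
        obtain ⟨w1, hw1, hw1f⟩ := hCD a (hv a (by simp))
        obtain ⟨w2, hw2, hw2f⟩ := ih (fun x hx => hv x (by simp [hx]))
        refine ⟨w1 ++ w2, ?_, by simp [hw1f, hw2f]⟩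
        intro y hy
        rcases List.mem_append.mp hy with h | h
        exacts [hw1 y h, hw2 y h]
    obtain ⟨w, hw⟩ := hex
    exact ⟨w, hw, fun w' hw' => hD w' w hw'.1 hw.1 (hw'.2.trans hw.2.symm)⟩
  refine ⟨fun v hv _ => part1 v hv, ?_⟩
  -- The subtype in the tsum
  set W := {w : List (List A) // (∀ y ∈ w, y ∈ D) ∧
      ∃ v : List (List A), (∀ x ∈ v, x ∈ C) ∧ v.length = k ∧ v.flatten = w.flatten} with hW
  set P : Finset (Fin k → List A) := Fintype.piFinset (fun _ : Fin k => C) with hP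
  -- factorization map
  have fact : ∀ p ∈ P, ∃! w : List (List A),
      (∀ y ∈ w, y ∈ D) ∧ w.flatten = (List.ofFn p).flatten := by
    intro p hp
    refine part1 (List.ofFn p) ?_
    intro x hx
    rw [List.mem_ofFn] at hx
    obtain ⟨i, rfl⟩ := hx
    exact Fintype.mem_piFinset.mp hp i
  let F : {p // p ∈ P} → W := fun p =>
    ⟨(fact p.1 p.2).choose, (fact p.1 p.2).choose_spec.1.1,
      List.ofFn p.1, fun x hx => by
        rw [List.mem_ofFn] at hx
        obtain ⟨i, rfl⟩ := hx
        exact Fintype.mem_piFinset.mp p.2 i,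
      by simp, (fact p.1 p.2).choose_spec.1.2.symm⟩
  have hFbij : Function.Bijective F := by
    constructor
    · intro p q hpq
      have hflat : (List.ofFn p.1).flatten = (List.ofFn q.1).flatten := by
        have h1 := (fact p.1 p.2).choose_spec.1.2
        have h2 := (fact q.1 q.2).choose_spec.1.2
        have h3 := congrArg (fun w : W => (w : List (List A))) hpq
        change (fact p.1 p.2).choose = (fact q.1 q.2).choose at h3
        rw [← h1, ← h2, h3]
      have : List.ofFn p.1 = List.ofFn q.1 :=
        hC _ _ (fun x hx => by
            rw [List.mem_ofFn] at hx; obtain ⟨i, rfl⟩ := hx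
            exact Fintype.mem_piFinset.mp p.2 i)
          (fun x hx => by
            rw [List.mem_ofFn] at hx; obtain ⟨i, rfl⟩ := hx
            exact Fintype.mem_piFinset.mp q.2 i) hflat
      exact Subtype.ext (List.ofFn_injective this)
    · rintro ⟨w, hwD, v, hvC, hvk, hvf⟩
      have hvlen : ∀ i : Fin k, i.1 < v.length := fun i => hvk ▸ i.2
      refine ⟨⟨fun i => v.get ⟨i.1, hvlen i⟩, ?_⟩, ?_⟩
      · exact Fintype.mem_piFinset.mpr fun i => hvC _ (v.get_mem _)
      · have hofn : List.ofFn (fun i : Fin k => v.get ⟨i.1, hvlen i⟩) = v := by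
          apply List.ext_get (by simp [hvk])
          intro n h1 h2
          simp
        apply Subtype.ext
        simp only [F]
        set p : {p // p ∈ P} := ⟨fun i : Fin k => v.get ⟨i.1, hvlen i⟩,
          Fintype.mem_piFinset.mpr fun i => hvC _ (v.get_mem _)⟩ with hp
        have h1 := (fact p.1 p.2).choose_spec.1
        refine hD _ _ h1.1 hwD ?_
        rw [h1.2]
        show (List.ofFn p.1).flatten = w.flatten
        rw [hp]
        simp only
        rw [hofn, hvf]
  -- rewrite tsum as finite sum over P
  have key : ∀ p : {p // p ∈ P},
      r ^ (-((((F p : List (List A))).flatten.length : ℤ))) =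
        ∏ i : Fin k, r ^ (-((p.1 i).length : ℤ)) := by
    intro p
    have hf := (fact p.1 p.2).choose_spec.1.2
    show r ^ (-(((fact p.1 p.2).choose.flatten.length : ℤ))) = _
    rw [hf]
    have hlen : (List.ofFn p.1).flatten.length = ∑ i : Fin k, (p.1 i).length := by
      rw [List.length_flatten]
      simp [List.map_ofFn, List.sum_ofFn]
    rw [hlen]
    have : ∀ n : ℕ, r ^ (-(n : ℤ)) = (r⁻¹) ^ n := by
      intro n
      rw [zpow_neg, ← inv_zpow, zpow_natCast]
    rw [this]
    simp only [this]
    rw [← Finset.prod_pow_eq_pow_sum]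
  have htsum : ∑' w : W, r ^ (-(((w : List (List A)).flatten.length : ℤ))) =
      ∑ p ∈ P.attach, ∏ i : Fin k, r ^ (-((p.1 i).length : ℤ)) := by
    rw [← (Equiv.ofBijective F hFbij).tsum_eq
      (fun w : W => r ^ (-(((w : List (List A)).flatten.length : ℤ)))), tsum_fintype]
    refine Finset.sum_congr rfl fun p _ => ?_
    exact key p
  rw [htsum, Finset.sum_attach P (fun p => ∏ i : Fin k, r ^ (-((p i).length : ℤ)))]
  rw [kraftSum, ← hr, Finset.sum_pow']
end
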